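/- Let S be a semigroup acting on the closed unit disk K ⊆ ℝ² (polar coordinates) by f^n g^m (r,θ) = (r/2^n, 2^m θ mod 2π), for (n,m) ∈ ℕ₀ × ℕ₀ \ {(0,0)}. This action is not super asymptotically nonexpansive: there exist x ∈ K and t ∈ S such that for every left ideal I of S there exist s ∈ I and y ∈ K with ‖st.x − st.y‖ > ‖x − y‖. -/

import Mathlib

open Real Complex


/-- the action of the semigroup
`S = {f^n g^m : (n,m) ∈ ℕ₀×ℕ₀ \ {(0,0)}}` (indices composed additively) on the closed
unit disk `K ⊆ ℂ`, where `f^n g^m` sends the point with polar coordinates `(r,θ)` to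
`(r/2^n, 2^m θ mod 2π)`, is not super asymptotically nonexpansive: there exist
`x ∈ K` and `t ∈ S` such that for every left ideal `I` of `S` there are `s ∈ I` and
`y ∈ K` with `‖st.x − st.y‖ > ‖x − y‖`. -/
theorem stmt16 (act : ℕ × ℕ → ℂ → ℂ)
    (hact : ∀ (p : ℕ × ℕ) (z : ℂ), act p z =
      if z = 0 then 0
      else ((‖z‖ / 2 ^ p.1 : ℝ) : ℂ) * (z / ((‖z‖ : ℝ) : ℂ)) ^ (2 ^ p.2)) :
    ∃ x ∈ {z : ℂ | ‖z‖ ≤ 1}, ∃ t : ℕ × ℕ, t ≠ (0, 0) ∧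
      ∀ I : Set (ℕ × ℕ), I.Nonempty → (∀ p ∈ I, p ≠ (0, 0)) →
        (∀ p ∈ I, ∀ q : ℕ × ℕ, q ≠ (0, 0) → q + p ∈ I) →
        ∃ s ∈ I, ∃ y ∈ {z : ℂ | ‖z‖ ≤ 1},
          ‖x - y‖ < ‖act (s + t) x - act (s + t) y‖ := by
  refine ⟨1, by simp, (0, 1), by decide, ?_⟩
  intro I hne _ hIl
  obtain ⟨⟨n, m⟩, hp⟩ := hne
  have hs : ((0, n + 2) : ℕ × ℕ) + (n, m) ∈ I := hIl _ hp _ (by simp)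
  set K : ℕ := n + 2 + m + 1 with hKdef
  set θ : ℝ := π / 2 ^ K with hθ
  have hθpos : 0 < θ := by positivity
  have hθle : θ ≤ 1 := by
    rw [hθ, div_le_one (by positivity)]
    calc π ≤ 4 := by linarith [Real.pi_le_four]
    _ ≤ 2 ^ K := by
        calc (4:ℝ) = 2 ^ 2 := by norm_num
        _ ≤ 2 ^ K := by
            apply pow_le_pow_right₀ (by norm_num)
            omega
  set y : ℂ := Complex.exp (θ * Complex.I) with hy
  have hyabs : ‖y‖ = 1 := by
    rw [hy, Complex.norm_exp]
    simp
  have hyne : y ≠ 0 := Complex.exp_ne_zero _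
  refine ⟨_, hs, y, by simp [hyabs], ?_⟩
  have hst : ((0, n + 2) : ℕ × ℕ) + (n, m) + (0, 1) = (n, K) := by
    simp [hKdef, Prod.ext_iff]
  rw [hst]
  have hx : act (n, K) 1 = ((1 / 2 ^ n : ℝ) : ℂ) := by
    rw [hact]; simp
  have hyK : y ^ 2 ^ K = -1 := by
    rw [hy, ← Complex.exp_nat_mul,
      show ((2 ^ K : ℕ) : ℂ) * (θ * Complex.I) = π * Complex.I by push_cast [hθ]; field_simp,
      Complex.exp_pi_mul_I]
  have hay : act (n, K) y = -((1 / 2 ^ n : ℝ) : ℂ) := by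
    rw [hact, if_neg hyne]
    simp [hyabs, hyK]
  rw [hx, hay]
  have hrhs : ‖((1 / 2 ^ n : ℝ) : ℂ) - -((1 / 2 ^ n : ℝ) : ℂ)‖ = 2 / 2 ^ n := by
    rw [sub_neg_eq_add, ← two_mul]
    rw [show ((2:ℂ) * ((1 / 2 ^ n : ℝ) : ℂ)) = ((2 / 2 ^ n : ℝ) : ℂ) by push_cast; ring]
    rw [Complex.norm_real, Real.norm_eq_abs]
    rw [abs_of_pos (by positivity)]
  rw [hrhs]
  -- LHS bound: |1 - y| ≤ 2θ < 2/2^n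
  have hlhs : ‖1 - y‖ ≤ 2 * θ := by
    have := Complex.norm_exp_sub_one_le (x := θ * Complex.I) (by simpa [abs_of_pos hθpos] using hθle)
    rw [← norm_neg, neg_sub]
    simpa [abs_of_pos hθpos] using this
  have hfin : 2 * θ < 2 / 2 ^ n := by
    rw [hθ, mul_div_assoc', div_lt_div_iff₀ (by positivity) (by positivity)]
    have h2K : (2:ℝ) ^ (n + 2) ≤ 2 ^ K := by
      apply pow_le_pow_right₀ (by norm_num)
      omega
    have hp4 : (2:ℝ) ^ (n + 2) = 4 * 2 ^ n := by ring
    nlinarith [Real.pi_lt_d2, pow_pos (show (0:ℝ) < 2 by norm_num) n]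
  linarith
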